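/- Let S be a nonempty subset of the nonnegative integers and X(S) the S-gap shift. Then X(S) has the specification property if and only if both of the following hold: the gaps between consecutive elements of S are bounded (there exists L such that for every s ∈ S that is not the maximum of S there exists t ∈ S with s < t ≤ s + L), and gcd{n + 1 : n ∈ S} = 1. -/

import Mathlib

open Set Filter

/-- The product topology on `ℤ → A`, where the alphabet `A` carries the
discrete topology. -/
def seqTop (A : Type*) : TopologicalSpace (ℤ → A) :=
  @Pi.topologicalSpace ℤ (fun _ => A) (fun _ => ⊥)

/-- The shift map `σ`, defined by `σ(x)_i = x_{i+1}`. -/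
def shiftMap {A : Type*} (x : ℤ → A) : ℤ → A := fun i => x (i + 1)

/-- A shift space: a nonempty, closed, shift-invariant subset of `A^ℤ`. -/
def IsShiftSpace {A : Type*} (X : Set (ℤ → A)) : Prop :=
  X.Nonempty ∧ @IsClosed _ (seqTop A) X ∧ shiftMap '' X = X

/-- The word `u` occurs in `x` at coordinate `i`. -/
def OccursAt {A : Type*} (x : ℤ → A) (u : List A) (i : ℤ) : Prop :=
  ∀ k : Fin u.length, x (i + ((k : ℕ) : ℤ)) = u.get k

/-- `u` is a word of the language `B(X)` of `X`. -/
def IsWordOf {A : Type*} (X : Set (ℤ → A)) (u : List A) : Prop :=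
  ∃ x ∈ X, OccursAt x u 0

/-- A shift of finite type: a shift space defined by finitely many
forbidden words. -/
def IsSFT {A : Type*} (X : Set (ℤ → A)) : Prop :=
  IsShiftSpace X ∧ ∃ F : Finset (List A),
    X = { x | ∀ u ∈ F, ∀ i : ℤ, ¬ OccursAt x u i }

/-- A code: a continuous shift-commuting map from `X` to `Y`. -/
def IsCode {A B : Type*} (X : Set (ℤ → A)) (Y : Set (ℤ → B))
    (φ : (ℤ → A) → (ℤ → B)) : Prop :=
  Set.MapsTo φ X Y ∧ @ContinuousOn _ _ (seqTop A) (seqTop B) φ X ∧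
    ∀ x ∈ X, φ (shiftMap x) = shiftMap (φ x)

/-- A factor code: a surjective code. -/
def IsFactorCode {A B : Type*} (X : Set (ℤ → A)) (Y : Set (ℤ → B))
    (φ : (ℤ → A) → (ℤ → B)) : Prop :=
  IsCode X Y φ ∧ Y ⊆ φ '' X

/-- A code is open if it maps (relatively) open subsets of `X` to
(relatively) open subsets of `Y`. -/
def IsOpenCode {A B : Type*} (X : Set (ℤ → A)) (Y : Set (ℤ → B))
    (φ : (ℤ → A) → (ℤ → B)) : Prop :=
  ∀ U : Set (ℤ → A), @IsOpen _ (seqTop A) U →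
    ∃ V : Set (ℤ → B), @IsOpen _ (seqTop B) V ∧ φ '' (X ∩ U) = Y ∩ V

/-- A code has a uniform lifting length `l`. -/
def HasUniformLiftingLength {A B : Type*} (X : Set (ℤ → A)) (Y : Set (ℤ → B))
    (φ : (ℤ → A) → (ℤ → B)) : Prop :=
  ∃ l : ℕ, ∀ k : ℕ, ∀ x ∈ X, ∀ y ∈ Y,
    (∀ i : ℤ, |i| ≤ (k : ℤ) + (l : ℤ) → φ x i = y i) →
    ∃ x' ∈ X, (∀ i : ℤ, |i| ≤ (k : ℤ) → x' i = x i) ∧ φ x' = y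

/-- Right continuing code. -/
def IsRightContinuing {A B : Type*} (X : Set (ℤ → A)) (Y : Set (ℤ → B))
    (φ : (ℤ → A) → (ℤ → B)) : Prop :=
  ∀ x ∈ X, ∀ y ∈ Y, (∃ M : ℤ, ∀ i ≤ M, φ x i = y i) →
    ∃ x' ∈ X, (∃ M : ℤ, ∀ i ≤ M, x' i = x i) ∧ φ x' = y

/-- Left continuing code. -/
def IsLeftContinuing {A B : Type*} (X : Set (ℤ → A)) (Y : Set (ℤ → B))
    (φ : (ℤ → A) → (ℤ → B)) : Prop :=
  ∀ x ∈ X, ∀ y ∈ Y, (∃ M : ℤ, ∀ i, M ≤ i → φ x i = y i) →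
    ∃ x' ∈ X, (∃ M : ℤ, ∀ i, M ≤ i → x' i = x i) ∧ φ x' = y

/-- `n` is a right continuing retract of `φ`. -/
def IsRightRetract {A B : Type*} (X : Set (ℤ → A)) (Y : Set (ℤ → B))
    (φ : (ℤ → A) → (ℤ → B)) (n : ℕ) : Prop :=
  ∀ x ∈ X, ∀ y ∈ Y, (∀ i : ℤ, i ≤ 0 → φ x i = y i) →
    ∃ x' ∈ X, φ x' = y ∧ ∀ i : ℤ, i ≤ -(n : ℤ) → x' i = x i

/-- `n` is a left continuing retract of `φ`. -/
def IsLeftRetract {A B : Type*} (X : Set (ℤ → A)) (Y : Set (ℤ → B))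
    (φ : (ℤ → A) → (ℤ → B)) (n : ℕ) : Prop :=
  ∀ x ∈ X, ∀ y ∈ Y, (∀ i : ℤ, 0 ≤ i → φ x i = y i) →
    ∃ x' ∈ X, φ x' = y ∧ ∀ i : ℤ, (n : ℤ) ≤ i → x' i = x i

/-- Right closing code. -/
def IsRightClosing {A B : Type*} (X : Set (ℤ → A))
    (φ : (ℤ → A) → (ℤ → B)) : Prop :=
  ∀ x ∈ X, ∀ x' ∈ X, (∃ M : ℤ, ∀ i ≤ M, x i = x' i) → φ x = φ x' → x = x'

/-- Left closing code. -/
def IsLeftClosing {A B : Type*} (X : Set (ℤ → A))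
    (φ : (ℤ → A) → (ℤ → B)) : Prop :=
  ∀ x ∈ X, ∀ x' ∈ X, (∃ M : ℤ, ∀ i, M ≤ i → x i = x' i) → φ x = φ x' → x = x'

/-- A sofic shift: a factor of a shift of finite type. -/
def IsSofic {B : Type*} (Y : Set (ℤ → B)) : Prop :=
  ∃ (C : Type) (_ : Fintype C) (Z : Set (ℤ → C)) (π : (ℤ → C) → (ℤ → B)),
    IsSFT Z ∧ IsFactorCode Z Y π

/-- Irreducibility of a shift space. -/
def IsIrreducibleShift {A : Type*} (X : Set (ℤ → A)) : Prop :=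
  ∀ u v : List A, IsWordOf X u → IsWordOf X v →
    ∃ w : List A, IsWordOf X (u ++ w ++ v)

/-- Mixing shift space. -/
def IsMixingShift {A : Type*} (X : Set (ℤ → A)) : Prop :=
  ∀ u v : List A, IsWordOf X u → IsWordOf X v →
    ∃ N : ℕ, ∀ n : ℕ, N ≤ n →
      ∃ w : List A, w.length = n ∧ IsWordOf X (u ++ w ++ v)

/-- The almost specification property. -/
def AlmostSpecified {A : Type*} (X : Set (ℤ → A)) : Prop :=
  ∃ N : ℕ, ∀ u v : List A, IsWordOf X u → IsWordOf X v →
    ∃ w : List A, w.length ≤ N ∧ IsWordOf X (u ++ w ++ v)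

/-- The specification property. -/
def HasSpecification {A : Type*} (X : Set (ℤ → A)) : Prop :=
  ∃ N : ℕ, ∀ u v : List A, IsWordOf X u → IsWordOf X v →
    ∃ w : List A, w.length = N ∧ IsWordOf X (u ++ w ++ v)

/-- A synchronizing word of `X`. -/
def IsSynchronizingWord {A : Type*} (X : Set (ℤ → A)) (v : List A) : Prop :=
  IsWordOf X v ∧ ∀ u w : List A, IsWordOf X (u ++ v) → IsWordOf X (v ++ w) →
    IsWordOf X (u ++ v ++ w)

/-- A synchronized system: an irreducible shift space with a synchronizing
word. -/
def IsSynchronizedSystem {A : Type*} (X : Set (ℤ → A)) : Prop :=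
  IsIrreducibleShift X ∧ ∃ v : List A, IsSynchronizingWord X v

/-- A subshift of `X`. -/
def IsSubshiftOf {A : Type*} (X' X : Set (ℤ → A)) : Prop :=
  IsShiftSpace X' ∧ X' ⊆ X

/-- The number of words of length `n` in the language of `X`. -/
noncomputable def wordCount {A : Type*} (X : Set (ℤ → A)) (n : ℕ) : ℕ :=
  Set.ncard { u : List A | u.length = n ∧ IsWordOf X u }

/-- The entropy `h(X) = lim (1/n) log |B_n(X)|` of a shift space (the limit
exists by subadditivity, hence equals the limsup used here). -/
noncomputable def entropy {A : Type*} (X : Set (ℤ → A)) : ℝ :=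
  Filter.limsup (fun n : ℕ => Real.log (wordCount X n) / (n : ℝ)) Filter.atTop

/-- The periodic condition `P(X) ↘ P(Y)`. -/
def PeriodicCondition {A B : Type*} (X : Set (ℤ → A)) (Y : Set (ℤ → B)) : Prop :=
  ∀ n : ℕ, 0 < n → (∃ x ∈ X, shiftMap^[n] x = x) → ∃ y ∈ Y, shiftMap^[n] y = y

/-- A cyclic cover `D_0, …, D_{p-1}` of a shift space `X`. -/
def IsCyclicCover {A : Type*} (X : Set (ℤ → A)) (p : ℕ)
    (D : ZMod p → Set (ℤ → A)) : Prop :=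
  0 < p ∧
  (∀ i, @IsClosed _ (seqTop A) (D i) ∧ D i ⊆ X) ∧
  (⋃ i, D i) = X ∧
  (∀ i, shiftMap '' D i = D (i + 1)) ∧
  (∀ i, ∀ U V : Set (ℤ → A), @IsOpen _ (seqTop A) U → @IsOpen _ (seqTop A) V →
    (D i ∩ U).Nonempty → (D i ∩ V).Nonempty →
    ∃ N : ℕ, ∀ n : ℕ, N ≤ n →
      ((shiftMap^[p * n] '' (D i ∩ U)) ∩ (D i ∩ V)).Nonempty) ∧
  (∀ i j, i ≠ j → ∀ U : Set (ℤ → A), @IsOpen _ (seqTop A) U →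
    X ∩ U ⊆ D i ∩ D j → X ∩ U = ∅)

/-- A left ray of `X`, recorded as `z : ℕ → A` where `z n` is the symbol at
coordinate `-(n+1)`. -/
def IsLeftRay {A : Type*} (X : Set (ℤ → A)) (z : ℕ → A) : Prop :=
  ∃ x ∈ X, ∀ n : ℕ, x (-((n : ℤ) + 1)) = z n

/-- Append the finite word `w` on the right of a left-infinite sequence `z`
(the last symbol of `w` ends up at coordinate `-1`). -/
def rayAppend {A : Type*} (z : ℕ → A) (w : List A) : ℕ → A :=
  fun n => if h : n < w.length then w.reverse.get ⟨n, by simpa using h⟩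
           else z (n - w.length)

/-- A left transitive point: every word of `X` occurs in `x_{(-∞,0]}`. -/
def IsLeftTransitive {A : Type*} (X : Set (ℤ → A)) (x : ℤ → A) : Prop :=
  ∀ u : List A, IsWordOf X u → ∃ i : ℤ, i + (u.length : ℤ) ≤ 1 ∧ OccursAt x u i

/-- A right transitive point: every word of `X` occurs in `x_{[0,∞)}`. -/
def IsRightTransitive {A : Type*} (X : Set (ℤ → A)) (x : ℤ → A) : Prop :=
  ∀ u : List A, IsWordOf X u → ∃ i : ℤ, 0 ≤ i ∧ OccursAt x u i

/-- Right continuing almost everywhere. -/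
def IsRightContinuingAE {A B : Type*} (X : Set (ℤ → A)) (Y : Set (ℤ → B))
    (φ : (ℤ → A) → (ℤ → B)) : Prop :=
  ∀ x ∈ X, IsLeftTransitive X x → ∀ y ∈ Y, (∃ M : ℤ, ∀ i ≤ M, φ x i = y i) →
    ∃ x' ∈ X, (∃ M : ℤ, ∀ i ≤ M, x' i = x i) ∧ φ x' = y

/-- Left continuing almost everywhere. -/
def IsLeftContinuingAE {A B : Type*} (X : Set (ℤ → A)) (Y : Set (ℤ → B))
    (φ : (ℤ → A) → (ℤ → B)) : Prop :=
  ∀ x ∈ X, IsRightTransitive X x → ∀ y ∈ Y, (∃ M : ℤ, ∀ i, M ≤ i → φ x i = y i) →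
    ∃ x' ∈ X, (∃ M : ℤ, ∀ i, M ≤ i → x' i = x i) ∧ φ x' = y

/-- The bi-infinite concatenations of blocks `1 0^s`, `s ∈ S`: the positions of
`1`s in `x` form the range of a strictly monotone `t : ℤ → ℤ` whose
consecutive gaps `t (n+1) - t n` all equal `s + 1` for some `s ∈ S`. -/
def GapConcat (S : Set ℕ) : Set (ℤ → Bool) :=
  { x | ∃ t : ℤ → ℤ, StrictMono t ∧ (∀ n : ℤ, ∃ s ∈ S, t (n + 1) = t n + (s : ℤ) + 1) ∧
      (∀ i : ℤ, x i = true ↔ ∃ n : ℤ, t n = i) }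

/-- The `S`-gap shift: the smallest shift space over `{0,1}` containing all
bi-infinite concatenations of blocks from `{1 0^s : s ∈ S}`. -/
def SGapShift (S : Set ℕ) : Set (ℤ → Bool) :=
  ⋂₀ { X : Set (ℤ → Bool) | IsShiftSpace X ∧ GapConcat S ⊆ X }


namespace SGapAux

open Set

variable {S : Set ℕ}

/-! ### Building points of `GapConcat` -/

open Classical in
/-- The point whose `1`s are exactly the range of `t`. -/
noncomputable def ptOf (t : ℤ → ℤ) : ℤ → Bool :=
  fun i => if ∃ n, t n = i then true else false

theorem ptOf_eq_true {t : ℤ → ℤ} {i : ℤ} : ptOf t i = true ↔ ∃ n, t n = i := by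
  by_cases h : ∃ n, t n = i <;> simp [ptOf, h]

theorem strictMono_of_gaps {t : ℤ → ℤ}
    (ht : ∀ n : ℤ, ∃ s ∈ S, t (n + 1) = t n + (s : ℤ) + 1) : StrictMono t := by
  apply strictMono_int_of_lt_succ
  intro n
  obtain ⟨s, _, h⟩ := ht n
  have : (0:ℤ) ≤ (s:ℤ) := Int.ofNat_nonneg s
  omega

theorem ptOf_mem {t : ℤ → ℤ}
    (ht : ∀ n : ℤ, ∃ s ∈ S, t (n + 1) = t n + (s : ℤ) + 1) : ptOf t ∈ GapConcat S :=
  ⟨t, strictMono_of_gaps ht, ht, fun _ => ptOf_eq_true⟩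

/-- positions strictly between consecutive `1`s carry `0`. -/
theorem char_false {x : ℤ → Bool} {t : ℤ → ℤ} (hmono : StrictMono t)
    (hchar : ∀ i : ℤ, x i = true ↔ ∃ n : ℤ, t n = i) {n i : ℤ}
    (h1 : t n < i) (h2 : i < t (n + 1)) : x i = false := by
  rw [← Bool.not_eq_true, hchar]
  rintro ⟨m, rfl⟩
  have hm1 : n < m := hmono.lt_iff_lt.mp h1
  have hm2 : m < n + 1 := hmono.lt_iff_lt.mp h2
  omega

/-- The constant-gap `t` function. -/
def constT (s : ℕ) : ℤ → ℤ := fun n => n * ((s : ℤ) + 1)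

theorem constT_gaps {s : ℕ} (hs : s ∈ S) :
    ∀ n : ℤ, ∃ s' ∈ S, constT s (n + 1) = constT s n + (s' : ℤ) + 1 :=
  fun n => ⟨s, hs, by simp [constT]; ring⟩

theorem gapConcat_nonempty (hS : S.Nonempty) : (GapConcat S).Nonempty := by
  obtain ⟨s, hs⟩ := hS
  exact ⟨ptOf (constT s), ptOf_mem (constT_gaps hs)⟩

theorem gapConcat_shift {x : ℤ → Bool} (hx : x ∈ GapConcat S) (a : ℤ) :
    (fun j => x (j + a)) ∈ GapConcat S := by
  obtain ⟨t, hmono, hgap, hchar⟩ := hx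
  refine ⟨fun n => t n - a, ?_, fun n => ?_, fun i => ?_⟩
  · intro m n h
    simp only [sub_lt_sub_iff_right]
    exact hmono h
  · obtain ⟨s, hs, h⟩ := hgap n
    exact ⟨s, hs, by simp only; omega⟩
  · simp only
    rw [hchar (i + a)]
    constructor <;> rintro ⟨n, h⟩ <;> exact ⟨n, by omega⟩

theorem gapConcat_subset_sGapShift : GapConcat S ⊆ SGapShift S := by
  intro x hx
  exact fun X hX => hX.2 hx

/-! ### Occurrence -/

theorem occursAt_iff {A : Type*} {x : ℤ → A} {u : List A} {i : ℤ} :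
    OccursAt x u i ↔ ∀ j : ℕ, (h : j < u.length) → x (i + (j:ℤ)) = u.get ⟨j, h⟩ :=
  ⟨fun H j h => H ⟨j, h⟩, fun H k => H k k.2⟩

theorem occurs_shift {A : Type*} {x : ℤ → A} {u : List A} {i : ℤ} (h : OccursAt x u i) :
    OccursAt (fun j => x (j + i)) u 0 := by
  intro k
  have := h k
  simpa [add_comm, add_left_comm, add_assoc] using this

/-! ### Words of the S-gap shift -/

theorem isWordOf_iff (hS : S.Nonempty) (u : List Bool) :
    IsWordOf (SGapShift S) u ↔ ∃ x ∈ GapConcat S, OccursAt x u 0 := by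
  constructor
  · rintro ⟨x, hx, hocc⟩
    -- topology setup
    letI : TopologicalSpace Bool := ⊥
    haveI : DiscreteTopology Bool := ⟨rfl⟩
    letI : TopologicalSpace (ℤ → Bool) := Pi.topologicalSpace
    set G := GapConcat S with hG
    have hcontS : Continuous (shiftMap (A := Bool)) :=
      continuous_pi fun i => continuous_apply (i + 1)
    have hcontP : Continuous (fun (y : ℤ → Bool) (j : ℤ) => y (j - 1)) :=
      continuous_pi fun i => continuous_apply (i - 1)
    have himgS : shiftMap '' G = G := by
      apply subset_antisymm
      · rintro _ ⟨y, hy, rfl⟩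
        exact gapConcat_shift hy 1
      · intro y hy
        refine ⟨fun j => y (j - 1), gapConcat_shift hy (-1), ?_⟩
        funext i
        show y (i + 1 - 1) = y i
        norm_num
    have himgP : (fun (y : ℤ → Bool) (j : ℤ) => y (j - 1)) '' G = G := by
      apply subset_antisymm
      · rintro _ ⟨y, hy, rfl⟩
        exact gapConcat_shift hy (-1)
      · intro y hy
        refine ⟨fun j => y (j + 1), gapConcat_shift hy 1, ?_⟩
        funext i
        show y (i - 1 + 1) = y i
        norm_num
    have hshiftspace : IsShiftSpace (closure G) := by
      refine ⟨(gapConcat_nonempty hS).mono subset_closure, isClosed_closure, ?_⟩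
      apply subset_antisymm
      · calc shiftMap '' closure G ⊆ closure (shiftMap '' G) :=
              image_closure_subset_closure_image hcontS
          _ = closure G := by rw [himgS]
      · intro y hy
        refine ⟨fun j => y (j - 1), ?_, ?_⟩
        · have : (fun (y : ℤ → Bool) (j : ℤ) => y (j - 1)) '' closure G ⊆
              closure ((fun (y : ℤ → Bool) (j : ℤ) => y (j - 1)) '' G) :=
            image_closure_subset_closure_image hcontP
          have h2 := this ⟨y, hy, rfl⟩
          rwa [himgP] at h2
        · funext i
          show y (i + 1 - 1) = y i
          norm_num
    have hsub : SGapShift S ⊆ closure G :=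
      sInter_subset_of_mem ⟨hshiftspace, subset_closure⟩
    have hxc : x ∈ closure G := hsub hx
    set U : Set (ℤ → Bool) := ⋂ k : Fin u.length, { y | y ((k : ℕ) : ℤ) = u.get k } with hU
    have hUopen : IsOpen U := by
      apply isOpen_iInter_of_finite
      intro k
      have heq : { y : ℤ → Bool | y ((k : ℕ) : ℤ) = u.get k } =
          (fun y : ℤ → Bool => y ((k : ℕ) : ℤ)) ⁻¹' {u.get k} := rfl
      rw [heq]
      exact (continuous_apply ((k : ℕ) : ℤ)).isOpen_preimage _ (isOpen_discrete _)
    have hxU : x ∈ U := by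
      rw [hU, Set.mem_iInter]
      intro k
      have := hocc k
      simpa using this
    obtain ⟨x', hx'U, hx'G⟩ := mem_closure_iff.mp hxc U hUopen hxU
    refine ⟨x', hx'G, fun k => ?_⟩
    have := Set.mem_iInter.mp hx'U k
    simpa using this
  · rintro ⟨x, hx, hocc⟩
    exact ⟨x, gapConcat_subset_sGapShift hx, hocc⟩

/-! ### Divisibility along gap points -/

theorem dvd_sub_of_gaps {t : ℤ → ℤ}
    (hgap : ∀ n : ℤ, ∃ s ∈ S, t (n + 1) = t n + (s : ℤ) + 1)
    {d : ℕ} (hd : ∀ n ∈ S, d ∣ n + 1) (a b : ℤ) : (d : ℤ) ∣ t b - t a := by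
  have key : ∀ k : ℕ, ∀ a : ℤ, (d : ℤ) ∣ t (a + (k : ℤ)) - t a := by
    intro k
    induction k with
    | zero => intro a; simp
    | succ k ih =>
      intro a
      obtain ⟨s, hs, h⟩ := hgap (a + (k : ℤ))
      have hdvd : (d : ℤ) ∣ ((s : ℤ) + 1) := by
        have := hd s hs
        have : (d : ℤ) ∣ ((s + 1 : ℕ) : ℤ) := Int.natCast_dvd_natCast.mpr this
        simpa using this
      have h2 := ih a
      have heq : t (a + ((k + 1 : ℕ) : ℤ)) - t a = ((s : ℤ) + 1) + (t (a + (k : ℤ)) - t a) := by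
        have : a + ((k + 1 : ℕ) : ℤ) = (a + (k : ℤ)) + 1 := by push_cast; ring
        rw [this, h]; ring
      rw [heq]
      exact dvd_add hdvd h2
  rcases le_total a b with hab | hab
  · have : b = a + ((b - a).toNat : ℤ) := by omega
    rw [this]
    exact key _ a
  · have : a = b + ((a - b).toNat : ℤ) := by omega
    have h2 := key (a - b).toNat b
    rw [← this] at h2
    have h3 := dvd_neg.mpr h2
    rwa [neg_sub] at h3

/-! ### Least index lemmas -/

theorem strictMono_linear {t : ℤ → ℤ} (hmono : StrictMono t) :
    ∀ a b : ℤ, a ≤ b → t a + (b - a) ≤ t b := by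
  have key : ∀ k : ℕ, ∀ a : ℤ, t a + (k : ℤ) ≤ t (a + (k : ℤ)) := by
    intro k
    induction k with
    | zero => intro a; simp
    | succ k ih =>
      intro a
      have h1 := ih a
      have h2 : t (a + (k : ℤ)) < t (a + (k : ℤ) + 1) := hmono (by omega)
      have : a + ((k + 1 : ℕ) : ℤ) = a + (k : ℤ) + 1 := by push_cast; ring
      rw [this]
      omega
  intro a b hab
  have := key (b - a).toNat a
  have hb : a + ((b - a).toNat : ℤ) = b := by omega
  rw [hb] at this
  omega

/-- existence of the least index with `t α ≥ c`. -/
theorem exists_least_index {t : ℤ → ℤ} (hmono : StrictMono t) (c : ℤ) :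
    ∃ α : ℤ, c ≤ t α ∧ t (α - 1) < c := by
  classical
  have hbdd : ∃ b : ℤ, ∀ z : ℤ, c ≤ t z → b ≤ z := by
    refine ⟨min 0 (c - t 0), fun z hz => ?_⟩
    by_contra hlt
    push_neg at hlt
    have hz0 : z ≤ 0 := by omega
    have := strictMono_linear hmono z 0 hz0
    omega
  have hinh : ∃ z : ℤ, c ≤ t z := by
    refine ⟨max 0 (c - t 0), ?_⟩
    have := strictMono_linear hmono 0 (max 0 (c - t 0)) (le_max_left _ _)
    omega
  obtain ⟨lb, hlb, hleast⟩ := Int.exists_least_of_bdd hbdd hinh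
  refine ⟨lb, hlb, ?_⟩
  by_contra h
  push_neg at h
  have := hleast _ h
  omega

/-! ### Bounded gaps: the next element of S above any reachable level -/

theorem bdd_next {L s₀ : ℕ} (hs₀ : s₀ ∈ S)
    (hL : ∀ s ∈ S, (∃ t ∈ S, s < t) → ∃ t ∈ S, s < t ∧ t ≤ s + L) :
    ∀ c : ℕ, (∃ s ∈ S, c ≤ s) → ∃ t ∈ S, c ≤ t ∧ t ≤ c + (L + s₀) := by
  classical
  intro c ⟨s, hsS, hcs⟩
  by_cases hbelow : ∃ s₁ ∈ S, s₁ < c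
  · obtain ⟨s₁, hs₁S, hs₁c⟩ := hbelow
    -- take the largest element of S below c
    set F := (Finset.range c).filter (· ∈ S) with hF
    have hne : F.Nonempty := ⟨s₁, by simp [hF, Finset.mem_filter, Finset.mem_range, hs₁c, hs₁S]⟩
    set s₂ := F.max' hne with hs₂
    have hs₂F : s₂ ∈ F := F.max'_mem hne
    have hs₂S : s₂ ∈ S := by
      have := hs₂F
      simp [hF, Finset.mem_filter] at this
      exact this.2
    have hs₂c : s₂ < c := by
      have := hs₂F
      simp [hF, Finset.mem_filter, Finset.mem_range] at this
      exact this.1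
    obtain ⟨t, htS, hlt, hle⟩ := hL s₂ hs₂S ⟨s, hsS, by omega⟩
    refine ⟨t, htS, ?_, by omega⟩
    by_contra htc
    push_neg at htc
    have : t ∈ F := by simp [hF, Finset.mem_filter, Finset.mem_range]; exact ⟨htc, htS⟩
    have := F.le_max' t this
    omega
  · push_neg at hbelow
    have := hbelow s₀ hs₀
    exact ⟨s₀, hs₀, this, by omega⟩

/-! ### Frobenius-type lemma -/

theorem exists_frobenius
    (hgcd : ∀ d : ℕ, (∀ n ∈ S, d ∣ n + 1) → d = 1) (hS : S.Nonempty) :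
    ∃ F : ℕ, ∀ m : ℕ, F ≤ m →
      ∃ l : List ℕ, (∀ s ∈ l, s ∈ S) ∧ (l.map (· + 1)).sum = m := by
  classical
  set M := AddSubmonoid.closure ((fun n : ℕ => n + 1) '' S) with hM
  have hlist : ∀ m ∈ M, ∃ l : List ℕ, (∀ s ∈ l, s ∈ S) ∧ (l.map (· + 1)).sum = m := by
    intro m hm
    induction hm using AddSubmonoid.closure_induction with
    | mem x hx =>
      obtain ⟨s, hs, rfl⟩ := hx
      exact ⟨[s], by simpa using hs, by simp⟩
    | zero => exact ⟨[], by simp, by simp⟩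
    | add x y hx hy ihx ihy =>
      obtain ⟨lx, hlx, hlxs⟩ := ihx
      obtain ⟨ly, hly, hlys⟩ := ihy
      refine ⟨lx ++ ly, ?_, by simp [hlxs, hlys]⟩
      intro s hs
      rcases List.mem_append.mp hs with h | h
      · exact hlx s h
      · exact hly s h
  -- find u = v + 1 both in M
  have hone : ∃ u v : ℕ, u ∈ M ∧ v ∈ M ∧ u = v + 1 := by
    set G := AddSubgroup.closure ((fun n : ℕ => (n : ℤ) + 1) '' S) with hG
    obtain ⟨d, hd⟩ := Int.subgroup_cyclic G
    have hdvd : ∀ n ∈ S, d.natAbs ∣ n + 1 := by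
      intro n hn
      have hmem : ((n : ℤ) + 1) ∈ G := AddSubgroup.subset_closure ⟨n, hn, rfl⟩
      rw [hd, AddSubgroup.mem_closure_singleton] at hmem
      obtain ⟨k, hk⟩ := hmem
      have hdvd2 : d ∣ (n : ℤ) + 1 := ⟨k, by rw [← hk, smul_eq_mul, mul_comm]⟩
      have h2 : d.natAbs ∣ ((n : ℤ) + 1).natAbs := Int.natAbs_dvd_natAbs.mpr hdvd2
      have h3 : ((n : ℤ) + 1).natAbs = n + 1 := by
        rw [show ((n : ℤ) + 1) = ((n + 1 : ℕ) : ℤ) by push_cast; ring, Int.natAbs_natCast]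
      rwa [h3] at h2
    have hd1 : d.natAbs = 1 := hgcd _ hdvd
    have h1G : (1 : ℤ) ∈ G := by
      have hdG : d ∈ G := by
        rw [hd]
        exact AddSubgroup.subset_closure rfl
      have hd' : d = 1 ∨ d = -1 := by omega
      rcases hd' with h | h
      · rwa [h] at hdG
      · have hneg := AddSubgroup.neg_mem G hdG
        rw [h] at hneg
        simpa using hneg
    have hrepr : ∀ a : ℤ, a ∈ G → ∃ u v : ℕ, u ∈ M ∧ v ∈ M ∧ (u : ℤ) - v = a := by
      intro a ha
      induction ha using AddSubgroup.closure_induction with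
      | mem x hx =>
        obtain ⟨s, hs, rfl⟩ := hx
        exact ⟨s + 1, 0, AddSubmonoid.subset_closure ⟨s, hs, rfl⟩, zero_mem _, by push_cast; ring⟩
      | zero => exact ⟨0, 0, zero_mem _, zero_mem _, by simp⟩
      | add x y hx hy ihx ihy =>
        obtain ⟨ux, vx, hux, hvx, hx2⟩ := ihx
        obtain ⟨uy, vy, huy, hvy, hy2⟩ := ihy
        exact ⟨ux + uy, vx + vy, add_mem hux huy, add_mem hvx hvy, by push_cast; omega⟩
      | neg x hx ihx =>
        obtain ⟨u, v, hu, hv, h2⟩ := ihx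
        exact ⟨v, u, hv, hu, by omega⟩
    obtain ⟨u, v, hu, hv, huv⟩ := hrepr 1 h1G
    exact ⟨u, v, hu, hv, by omega⟩
  obtain ⟨u, v, huM, hvM, huv⟩ := hone
  rcases Nat.eq_zero_or_pos v with hv0 | hvpos
  · -- then 1 ∈ M
    subst hv0
    refine ⟨0, fun m _ => hlist m ?_⟩
    have h1 : (1 : ℕ) ∈ M := by rwa [huv] at huM  -- u = 1? huv : u = 0 + 1
    have : m • (1 : ℕ) ∈ M := AddSubmonoid.nsmul_mem M h1 m
    simpa using this
  · refine ⟨v * v, fun m hm => hlist m ?_⟩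
    set q := m / v with hq
    set r := m % v with hr
    have hrv : r < v := Nat.mod_lt _ hvpos
    have hmqr : m = q * v + r := by
      rw [hq, hr, Nat.mul_comm]
      exact (Nat.div_add_mod m v).symm
    have hqv : v ≤ q := by
      rw [hq, Nat.le_div_iff_mul_le hvpos]
      exact hm
    have hqr : r ≤ q := by omega
    have : (q - r) • v + r • u ∈ M := add_mem (AddSubmonoid.nsmul_mem M hvM _) (AddSubmonoid.nsmul_mem M huM _)
    have heq : (q - r) • v + r • u = m := by
      simp only [smul_eq_mul, huv]
      have expand : (q - r) * v + r * (v + 1) = (q - r) * v + r * v + r := by ring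
      rw [expand, ← Nat.add_mul, Nat.sub_add_cancel hqr]
      exact hmqr.symm
    rwa [heq] at this

/-! ### The splice construction -/

theorem map_cast_sum (l : List ℕ) :
    (List.map (fun s : ℕ => (s : ℤ) + 1) l).sum
      = (((List.map (fun s : ℕ => s + 1) l).sum : ℕ) : ℤ) := by
  induction l with
  | nil => simp
  | cons a t ih =>
    simp only [List.map_cons, List.sum_cons, ih]
    push_cast
    ring

theorem spec_construct {L' F : ℕ}
    (hL' : ∀ c : ℕ, (∃ s ∈ S, c ≤ s) → ∃ t ∈ S, c ≤ t ∧ t ≤ c + L')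
    (hF : ∀ m : ℕ, F ≤ m → ∃ l : List ℕ, (∀ s ∈ l, s ∈ S) ∧ (l.map (· + 1)).sum = m)
    {N : ℕ} (hN : F + 2 * L' + 1 ≤ N)
    (u v : List Bool)
    (hu : ∃ x ∈ GapConcat S, OccursAt x u 0)
    (hv : ∃ y ∈ GapConcat S, OccursAt y v 0) :
    ∃ w : List Bool, w.length = N ∧ ∃ z ∈ GapConcat S, OccursAt z (u ++ w ++ v) 0 := by
  classical
  obtain ⟨x, ⟨tx, hmx, hgx, hcx⟩, hoccu⟩ := hu
  obtain ⟨y, ⟨ty, hmy, hgy, hcy⟩, hoccv⟩ := hv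
  set p := u.length with hp
  set q := v.length with hq
  obtain ⟨α, hα1, hα2⟩ := exists_least_index hmx (p : ℤ)
  obtain ⟨δ, hδ1, hδ2⟩ := exists_least_index hmy 0
  set bn := ((p : ℤ) - 1 - tx (α - 1)).toNat with hbndef
  set an := (ty δ).toNat with handef
  have hbn : (bn : ℤ) = (p : ℤ) - 1 - tx (α - 1) := by omega
  have han : (an : ℤ) = ty δ := by omega
  -- elements of S above bn and an
  have hbS : ∃ s ∈ S, bn ≤ s := by
    obtain ⟨s, hs, hgap⟩ := hgx (α - 1)
    refine ⟨s, hs, ?_⟩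
    have : (α - 1) + 1 = α := by omega
    rw [this] at hgap
    omega
  have haS : ∃ s ∈ S, an ≤ s := by
    obtain ⟨s, hs, hgap⟩ := hgy (δ - 1)
    refine ⟨s, hs, ?_⟩
    have : (δ - 1) + 1 = δ := by omega
    rw [this] at hgap
    omega
  obtain ⟨sb, hsbS, hsb1, hsb2⟩ := hL' bn hbS
  obtain ⟨sa, hsaS, hsa1, hsa2⟩ := hL' an haS
  -- the middle length
  set m := N - 1 - (sb - bn) - (sa - an) with hmdef
  have hmF : F ≤ m := by omega
  have hmz : (m : ℤ) = (N : ℤ) - 1 - ((sb : ℤ) - bn) - ((sa : ℤ) - an) := by omega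
  obtain ⟨l, hlS, hlsum⟩ := hF m hmF
  set r := l.length with hrdef
  set Lz : List ℤ := List.map (fun s : ℕ => (s : ℤ) + 1) l with hLzdef
  have hLzlen : Lz.length = r := by simp [hLzdef, hrdef]
  have hLzsum : Lz.sum = (m : ℤ) := by
    rw [hLzdef, map_cast_sum, hlsum]
  have hLzpos : ∀ a ∈ Lz, 1 ≤ a := by
    intro a ha
    rw [hLzdef] at ha
    obtain ⟨s, _, rfl⟩ := List.mem_map.mp ha
    omega
  -- partial sums
  set psum : ℕ → ℤ := fun k => (Lz.take k).sum with hpsumdef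
  have hpsum0 : psum 0 = 0 := by simp [hpsumdef]
  have hpsumsucc : ∀ k, k < r → ∀ (hk : k < Lz.length), psum (k + 1) = psum k + Lz[k] := by
    intro k hk hk'
    simp only [hpsumdef]
    exact List.sum_take_succ _ _ _
  have hpsumnn : ∀ k, 0 ≤ psum k := by
    intro k
    apply List.sum_nonneg
    intro a ha
    have := hLzpos a (List.take_subset _ _ ha)
    omega
  have hpsumle : ∀ k, psum k ≤ (m : ℤ) := by
    intro k
    have hsplit : Lz.take k ++ Lz.drop k = Lz := List.take_append_drop _ _
    have h2 : (Lz.take k).sum + (Lz.drop k).sum = (m : ℤ) := by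
      rw [← List.sum_append, hsplit, hLzsum]
    have h3 : 0 ≤ (Lz.drop k).sum := by
      apply List.sum_nonneg
      intro a ha
      have := hLzpos a (List.drop_subset _ _ ha)
      omega
    simp only [hpsumdef]
    omega
  have hpsumr : psum r = (m : ℤ) := by
    simp only [hpsumdef]
    rw [← hLzlen, List.take_length, hLzsum]
  -- the new ones function
  set B : ℤ := (p : ℤ) + sb - bn with hBdef
  set T : ℤ → ℤ := fun n =>
    if n < α then tx n
    else if n < α + r + 1 then B + psum (n - α).toNat
    else ty (n - (α + (r : ℤ) + 1) + δ) + ((N : ℤ) + p) with hTdef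
  have hT1 : ∀ n, n < α → T n = tx n := by
    intro n hn
    simp only [hTdef]
    rw [if_pos hn]
  have hT2 : ∀ n, α ≤ n → n < α + r + 1 → T n = B + psum (n - α).toNat := by
    intro n h1 h2
    simp only [hTdef]
    rw [if_neg (by omega), if_pos h2]
  have hT3 : ∀ n, α + r + 1 ≤ n → T n = ty (n - (α + (r : ℤ) + 1) + δ) + ((N : ℤ) + p) := by
    intro n h1
    simp only [hTdef]
    rw [if_neg (by omega), if_neg (by omega)]
  -- gap property
  have hTgap : ∀ n : ℤ, ∃ s ∈ S, T (n + 1) = T n + (s : ℤ) + 1 := by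
    intro n
    rcases lt_trichotomy (n + 1) α with hc | hc | hc
    · obtain ⟨s, hs, hgap⟩ := hgx n
      exact ⟨s, hs, by rw [hT1 n (by omega), hT1 (n + 1) (by omega)]; exact hgap⟩
    · -- n = α - 1
      refine ⟨sb, hsbS, ?_⟩
      rw [hT1 n (by omega), hT2 (n + 1) (by omega) (by omega)]
      have he : (n + 1 - α).toNat = 0 := by omega
      rw [he, hpsum0]
      have hn : n = α - 1 := by omega
      rw [hn]
      omega
    · rcases lt_trichotomy (n + 1) (α + r + 1) with hd | hd | hd
      · -- interior of the middle block
        have hk : (n - α).toNat < r := by omega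
        have hk' : (n - α).toNat < Lz.length := by omega
        refine ⟨l[(n - α).toNat]'(by omega), hlS _ (l.getElem_mem _), ?_⟩
        rw [hT2 n (by omega) (by omega), hT2 (n + 1) (by omega) (by omega)]
        have he : (n + 1 - α).toNat = (n - α).toNat + 1 := by omega
        rw [he, hpsumsucc _ hk hk']
        have hLk : Lz[(n - α).toNat] = (l[(n - α).toNat]'(by omega) : ℤ) + 1 := by
          simp [hLzdef]
        rw [hLk]
        ring
      · -- n = α + r
        refine ⟨sa, hsaS, ?_⟩
        rw [hT2 n (by omega) (by omega), hT3 (n + 1) (by omega)]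
        have he : (n - α).toNat = r := by omega
        rw [he, hpsumr]
        have hidx : n + 1 - (α + (r : ℤ) + 1) + δ = δ := by omega
        rw [hidx]
        omega
      · -- in the y part
        obtain ⟨s, hs, hgap⟩ := hgy (n - (α + (r : ℤ) + 1) + δ)
        refine ⟨s, hs, ?_⟩
        rw [hT3 n (by omega), hT3 (n + 1) (by omega)]
        have hidx : n + 1 - (α + (r : ℤ) + 1) + δ = (n - (α + (r : ℤ) + 1) + δ) + 1 := by ring
        rw [hidx, hgap]
        ring
  have hTmono : StrictMono T := strictMono_of_gaps hTgap
  -- range facts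
  have hxlt : ∀ n, n < α → tx n < (p : ℤ) := by
    intro n hn
    have := hmx.monotone (show n ≤ α - 1 by omega)
    omega
  have hR2 : ∀ n, α ≤ n → n < α + r + 1 → (p : ℤ) ≤ T n ∧ T n < (p : ℤ) + N := by
    intro n h1 h2
    rw [hT2 n h1 h2]
    have := hpsumnn (n - α).toNat
    have := hpsumle (n - α).toNat
    constructor <;> omega
  have hR3 : ∀ n, α + r + 1 ≤ n → (p : ℤ) + N ≤ T n := by
    intro n h1
    rw [hT3 n h1]
    have := hmy.monotone (show δ ≤ n - (α + (r : ℤ) + 1) + δ by omega)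
    omega
  -- matching on the u window
  have M1 : ∀ i : ℤ, 0 ≤ i → i < (p : ℤ) → ptOf T i = x i := by
    intro i h0 hip
    rw [Bool.eq_iff_iff, ptOf_eq_true, hcx i]
    constructor
    · rintro ⟨n, hTn⟩
      rcases lt_trichotomy n α with hc | hc | hc
      · exact ⟨n, by rw [← hT1 n hc]; exact hTn⟩
      · exfalso; have := hR2 n (by omega) (by omega); omega
      · rcases lt_or_ge n (α + r + 1) with hd | hd
        · exfalso; have := hR2 n (by omega) hd; omega
        · exfalso; have := hR3 n hd; omega
    · rintro ⟨n, htxn⟩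
      have hn : n < α := by
        by_contra hcon
        push_neg at hcon
        have := hmx.monotone hcon
        omega
      exact ⟨n, by rw [hT1 n hn]; exact htxn⟩
  -- matching on the v window
  have M2 : ∀ i : ℤ, (p : ℤ) + N ≤ i → ptOf T i = y (i - ((p : ℤ) + N)) := by
    intro i h0
    rw [Bool.eq_iff_iff, ptOf_eq_true, hcy (i - ((p : ℤ) + N))]
    constructor
    · rintro ⟨n, hTn⟩
      have hn : α + r + 1 ≤ n := by
        by_contra hcon
        push_neg at hcon
        rcases lt_or_ge n α with hc | hc
        · have h1 := hT1 n hc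
          have h2 := hxlt n hc
          omega
        · have := hR2 n hc hcon
          omega
      rw [hT3 n hn] at hTn
      exact ⟨n - (α + (r : ℤ) + 1) + δ, by omega⟩
    · rintro ⟨n, htyn⟩
      have hn : δ ≤ n := by
        by_contra hcon
        push_neg at hcon
        have := hmy.monotone (show n ≤ δ - 1 by omega)
        omega
      refine ⟨n - δ + (α + (r : ℤ) + 1), ?_⟩
      rw [hT3 _ (by omega)]
      have hidx : n - δ + (α + (r : ℤ) + 1) - (α + (r : ℤ) + 1) + δ = n := by ring
      rw [hidx]
      omega
  -- assemble
  set w : List Bool := List.ofFn (fun k : Fin N => ptOf T ((p : ℤ) + (k : ℕ))) with hwdef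
  have hwlen : w.length = N := by simp [hwdef]
  refine ⟨w, hwlen, ptOf T, ptOf_mem hTgap, ?_⟩
  rw [occursAt_iff]
  intro j hj
  have hlen : (u ++ w ++ v).length = p + N + q := by
    simp only [List.length_append, hwlen, hp, hq]
  rw [hlen] at hj
  rw [List.get_eq_getElem]
  rcases lt_or_ge j p with hcase | hcase
  · -- the u part
    have hg1 : (u ++ w ++ v)[j]'(by simp [hwlen]; omega) = u[j]'(by omega) := by
      rw [List.getElem_append_left (by simp [hwlen]; omega), List.getElem_append_left (by omega)]
    rw [hg1]
    have hx1 : ptOf T (0 + (j : ℤ)) = x (0 + (j : ℤ)) := by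
      rw [zero_add]
      exact M1 j (by omega) (by omega)
    rw [hx1]
    have := occursAt_iff.mp hoccu j (by omega)
    rw [this, List.get_eq_getElem]
  · rcases lt_or_ge j (p + N) with hcase2 | hcase2
    · -- the w part
      have hg1 : (u ++ w ++ v)[j]'(by simp [hwlen]; omega) = w[j - p]'(by omega) := by
        rw [List.getElem_append_left (by simp [hwlen]; omega),
          List.getElem_append_right (by omega)]
      rw [hg1]
      have hg2 : w[j - p]'(by omega) = ptOf T ((p : ℤ) + ((j - p : ℕ) : ℤ)) := by
        simp only [hwdef]
        rw [List.getElem_ofFn]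
      rw [hg2]
      congr 1
      omega
    · -- the v part
      have hg1 : (u ++ w ++ v)[j]'(by simp [hwlen]; omega) = v[j - (p + N)]'(by omega) := by
        rw [List.getElem_append_right (by simp [hwlen]; omega)]
        congr 1
        simp only [List.length_append, hwlen, hp]
      rw [hg1]
      have hx1 : ptOf T (0 + (j : ℤ)) = y ((j : ℤ) - ((p : ℤ) + N)) := by
        rw [zero_add]
        exact M2 j (by omega)
      rw [hx1]
      have := occursAt_iff.mp hoccv (j - (p + N)) (by omega)
      rw [show (0 : ℤ) + ((j - (p + N) : ℕ) : ℤ) = (j : ℤ) - ((p : ℤ) + N) by omega] at this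
      rw [this, List.get_eq_getElem]

/-! ### Specific words -/

theorem occ_get {z : ℤ → Bool} {lst : List Bool} (hocc : OccursAt z lst 0)
    {j : ℕ} (hj : j < lst.length) : z (j : ℤ) = lst.get ⟨j, hj⟩ := by
  have := occursAt_iff.mp hocc j hj
  simpa using this

theorem constT_zero (s : ℕ) : constT s 0 = 0 := by simp [constT]

theorem constT_one (s : ℕ) : constT s 1 = (s : ℤ) + 1 := by simp [constT]

theorem word_one (hs₀ : s₀ ∈ S) : IsWordOf (SGapShift S) [true] := by
  refine (isWordOf_iff ⟨s₀, hs₀⟩ _).mpr ⟨ptOf (constT s₀), ptOf_mem (constT_gaps hs₀), ?_⟩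
  rw [occursAt_iff]
  intro j hj
  simp only [List.length_singleton] at hj
  interval_cases j
  simp only [List.get]
  rw [show (0:ℤ) + ((0:ℕ):ℤ) = 0 by norm_num]
  exact ptOf_eq_true.mpr ⟨0, constT_zero s₀⟩

theorem word_onezeros (c : ℕ) (hc : ∃ t ∈ S, c ≤ t) :
    IsWordOf (SGapShift S) (true :: List.replicate c false) := by
  obtain ⟨t₀, ht₀S, hct₀⟩ := hc
  refine (isWordOf_iff ⟨t₀, ht₀S⟩ _).mpr ⟨ptOf (constT t₀), ptOf_mem (constT_gaps ht₀S), ?_⟩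
  rw [occursAt_iff]
  intro j hj
  simp only [List.length_cons, List.length_replicate] at hj
  rcases Nat.eq_zero_or_pos j with h0 | hpos
  · subst h0
    simp only [List.get]
    rw [show (0:ℤ) + ((0:ℕ):ℤ) = 0 by norm_num]
    exact ptOf_eq_true.mpr ⟨0, constT_zero t₀⟩
  · obtain ⟨j', rfl⟩ := Nat.exists_eq_succ_of_ne_zero (Nat.pos_iff_ne_zero.mp hpos)
    have hval : (true :: List.replicate c false).get ⟨j' + 1, by simp; omega⟩ = false := by
      rw [List.get_eq_getElem, List.getElem_cons_succ, List.getElem_replicate]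
    rw [hval]
    refine char_false (strictMono_of_gaps (constT_gaps ht₀S)) (fun i => ptOf_eq_true)
      (n := 0) ?_ ?_
    · rw [constT_zero]
      omega
    · have h1 : constT t₀ (0 + 1) = (t₀ : ℤ) + 1 := by norm_num [constT]
      rw [h1]
      omega

theorem word_zerosone (c : ℕ) (hc : ∃ t ∈ S, c ≤ t) :
    IsWordOf (SGapShift S) (List.replicate c false ++ [true]) := by
  obtain ⟨t₀, ht₀S, hct₀⟩ := hc
  set z := ptOf (constT t₀) with hzdef
  have hzmem := ptOf_mem (S := S) (constT_gaps ht₀S)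
  have hocc : OccursAt z (List.replicate c false ++ [true]) (-(c : ℤ)) := by
    rw [occursAt_iff]
    intro j hj
    simp only [List.length_append, List.length_replicate, List.length_singleton] at hj
    rcases lt_or_ge j c with hlt | hge
    · have hval : (List.replicate c false ++ [true]).get ⟨j, by simp; omega⟩ = false := by
        rw [List.get_eq_getElem, List.getElem_append_left (by simpa using hlt),
          List.getElem_replicate]
      rw [hval]
      apply char_false (strictMono_of_gaps (constT_gaps ht₀S)) (fun i => ptOf_eq_true)
        (n := -1)
      · show constT t₀ (-1) < -(c:ℤ) + j
        simp only [constT]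
        omega
      · show -(c:ℤ) + j < constT t₀ (-1 + 1)
        norm_num [constT_zero]
        omega
    · have hjc : j = c := by omega
      subst hjc
      have hval : (List.replicate j false ++ [true]).get ⟨j, by simp⟩ = true := by
        rw [List.get_eq_getElem, List.getElem_append_right (by simp)]
        simp
      rw [hval]
      rw [show -(j:ℤ) + j = 0 by omega]
      exact ptOf_eq_true.mpr ⟨0, constT_zero t₀⟩
  exact (isWordOf_iff ⟨t₀, ht₀S⟩ _).mpr
    ⟨fun i => z (i + (-(c : ℤ))), gapConcat_shift hzmem _, occurs_shift hocc⟩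

/-! ### Splitting occurrences -/

theorem occursAt_append {A : Type*} {z : ℤ → A} {a b : List A} {i : ℤ}
    (h : OccursAt z (a ++ b) i) :
    OccursAt z a i ∧ OccursAt z b (i + (a.length : ℤ)) := by
  constructor
  · intro k
    have hk : (k : ℕ) < (a ++ b).length := by simp only [List.length_append]; omega
    have h2 := occursAt_iff.mp h k hk
    rw [List.get_eq_getElem, List.getElem_append_left k.2] at h2
    rw [List.get_eq_getElem]
    exact h2
  · intro k
    have hk : a.length + (k : ℕ) < (a ++ b).length := by
      have := k.2
      simp only [List.length_append]
      omega
    have h2 := occursAt_iff.mp h (a.length + (k : ℕ)) hk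
    rw [List.get_eq_getElem, List.getElem_append_right (Nat.le_add_right a.length (k : ℕ))] at h2
    simp only [Nat.add_sub_cancel_left] at h2
    rw [List.get_eq_getElem]
    rw [show i + (a.length : ℤ) + ((k : ℕ) : ℤ) = i + ((a.length + (k : ℕ) : ℕ) : ℤ) by
      push_cast; ring]
    exact h2

theorem occursAt_true {z : ℤ → Bool} {i : ℤ} (h : OccursAt z [true] i) : z i = true := by
  have h2 := occursAt_iff.mp h 0 (by simp)
  simpa using h2

theorem occursAt_onezeros {z : ℤ → Bool} {c : ℕ} {i : ℤ}
    (h : OccursAt z (true :: List.replicate c false) i) :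
    z i = true ∧ ∀ j : ℕ, j < c → z (i + 1 + (j : ℤ)) = false := by
  constructor
  · have h2 := occursAt_iff.mp h 0 (by simp)
    simpa using h2
  · intro j hj
    have h2 := occursAt_iff.mp h (j + 1) (by simp; omega)
    rw [List.get_eq_getElem, List.getElem_cons_succ, List.getElem_replicate] at h2
    rw [← h2]
    congr 1
    push_cast
    ring

theorem occursAt_zerosone {z : ℤ → Bool} {c : ℕ} {i : ℤ}
    (h : OccursAt z (List.replicate c false ++ [true]) i) :
    z (i + (c : ℤ)) = true := by
  obtain ⟨-, h2⟩ := occursAt_append h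
  simp only [List.length_replicate] at h2
  exact occursAt_true h2

end SGapAux

/-- The `S`-gap shift has the specification property iff the
gaps between consecutive elements of `S` are bounded and
`gcd {n + 1 : n ∈ S} = 1`. -/
theorem sGapShift_specification_iff
    (S : Set ℕ) (hS : S.Nonempty) :
    HasSpecification (SGapShift S) ↔
      ((∃ L : ℕ, ∀ s ∈ S, (∃ t ∈ S, s < t) → ∃ t ∈ S, s < t ∧ t ≤ s + L) ∧
        ∀ d : ℕ, (∀ n ∈ S, d ∣ n + 1) → d = 1) := by
  classical
  obtain ⟨s₀, hs₀⟩ := hS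
  constructor
  · rintro ⟨N, hspec⟩
    constructor
    · -- bounded gaps
      refine ⟨N + 2, ?_⟩
      rintro s hsS ⟨t₀, ht₀S, hst₀⟩
      obtain ⟨w, hwlen, hword⟩ := hspec (true :: List.replicate (s + 1) false) [true]
        (SGapAux.word_onezeros (s + 1) ⟨t₀, ht₀S, by omega⟩) (SGapAux.word_one hs₀)
      rw [SGapAux.isWordOf_iff ⟨s₀, hs₀⟩] at hword
      obtain ⟨z, ⟨t, hm, hg, hc⟩, hocc⟩ := hword
      obtain ⟨hocc1, hocc2⟩ := SGapAux.occursAt_append hocc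
      obtain ⟨hocc3, -⟩ := SGapAux.occursAt_append hocc1
      obtain ⟨hz0, hzeros⟩ := SGapAux.occursAt_onezeros hocc3
      have hlast : z ((s : ℤ) + 2 + N) = true := by
        have h2 := SGapAux.occursAt_true hocc2
        have heq : (0 : ℤ) + (((true :: List.replicate (s + 1) false) ++ w).length : ℤ)
            = (s : ℤ) + 2 + N := by
          simp [hwlen]
          push_cast
          ring
        rwa [heq] at h2
      obtain ⟨n, hn⟩ := (hc 0).mp hz0
      obtain ⟨nl, hnl⟩ := (hc ((s : ℤ) + 2 + N)).mp hlast
      obtain ⟨s', hs'S, hgap⟩ := hg n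
      have hnlt : n < nl := by
        rw [← hm.lt_iff_lt]
        omega
      have hle : t (n + 1) ≤ t nl := hm.monotone (by omega)
      have hz1 : z (t (n + 1)) = true := (hc _).mpr ⟨n + 1, rfl⟩
      have hss' : s < s' := by
        by_contra hcon
        push_neg at hcon
        have hf := hzeros s' (by omega)
        rw [show (0 : ℤ) + 1 + (s' : ℤ) = t (n + 1) by omega] at hf
        rw [hf] at hz1
        exact Bool.false_ne_true hz1
      exact ⟨s', hs'S, hss', by omega⟩
    · -- gcd condition
      intro d hd
      have key : ∀ c : ℕ, (∃ tt ∈ S, c ≤ tt) → (d : ℤ) ∣ (N : ℤ) + 1 + c := by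
        intro c hcS
        obtain ⟨w, hwlen, hword⟩ := hspec [true] (List.replicate c false ++ [true])
          (SGapAux.word_one hs₀) (SGapAux.word_zerosone c hcS)
        rw [SGapAux.isWordOf_iff ⟨s₀, hs₀⟩] at hword
        obtain ⟨z, ⟨t, hm, hg, hc⟩, hocc⟩ := hword
        obtain ⟨hocc1, hocc2⟩ := SGapAux.occursAt_append hocc
        obtain ⟨hocc3, -⟩ := SGapAux.occursAt_append hocc1
        have hz0 : z 0 = true := SGapAux.occursAt_true hocc3
        have hlast : z ((N : ℤ) + 1 + c) = true := by
          have h2 := SGapAux.occursAt_zerosone hocc2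
          have heq : (0 : ℤ) + ((([true] ++ w).length : ℕ) : ℤ) + (c : ℤ)
              = (N : ℤ) + 1 + c := by
            simp only [List.length_append, List.length_singleton, hwlen]
            push_cast
            ring
          rwa [heq] at h2
        obtain ⟨n, hn⟩ := (hc 0).mp hz0
        obtain ⟨nl, hnl⟩ := (hc ((N : ℤ) + 1 + c)).mp hlast
        have hdvd := SGapAux.dvd_sub_of_gaps hg hd n nl
        rw [hn, hnl] at hdvd
        simpa using hdvd
      have h1 : (d : ℤ) ∣ (N : ℤ) + 1 := by
        have := key 0 ⟨s₀, hs₀, by omega⟩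
        simpa using this
      have h2 : (d : ℤ) ∣ (N : ℤ) + 1 + s₀ := key s₀ ⟨s₀, hs₀, le_refl _⟩
      have h3 : (d : ℤ) ∣ (s₀ : ℤ) := by
        have := dvd_sub h2 h1
        simpa using this
      have h4 : (d : ℤ) ∣ (s₀ : ℤ) + 1 := by
        have := hd s₀ hs₀
        have h5 : (d : ℤ) ∣ ((s₀ + 1 : ℕ) : ℤ) := Int.natCast_dvd_natCast.mpr this
        simpa using h5
      have h6 : (d : ℤ) ∣ 1 := by
        have := dvd_sub h4 h3
        simpa using this
      have h7 : d ∣ 1 := by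
        rw [show (1 : ℤ) = ((1 : ℕ) : ℤ) by norm_num] at h6
        exact Int.natCast_dvd_natCast.mp h6
      exact Nat.dvd_one.mp h7
  · rintro ⟨⟨L, hL⟩, hgcd⟩
    have hnext := SGapAux.bdd_next hs₀ hL
    obtain ⟨F, hF⟩ := SGapAux.exists_frobenius hgcd ⟨s₀, hs₀⟩
    refine ⟨F + 2 * (L + s₀) + 1, ?_⟩
    intro u v hu hv
    rw [SGapAux.isWordOf_iff ⟨s₀, hs₀⟩] at hu hv
    obtain ⟨w, hwlen, z, hz, hocc⟩ :=
      SGapAux.spec_construct hnext hF (le_refl _) u v hu hv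
    exact ⟨w, hwlen, (SGapAux.isWordOf_iff ⟨s₀, hs₀⟩ _).mpr ⟨z, hz, hocc⟩⟩
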